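/- Let R be a unital ring, d a positive integer, and A in M_d(R). Then A lies in the additive subgroup [M_d(R), M_d(R)] generated by commutators if and only if trace(A) lies in [R,R]. In particular, any matrix of trace zero is a sum of commutators. -/

import Mathlib

/-- The additive subgroup of a ring generated by commutators. -/
def commSubgroup (S : Type*) [Ring S] : AddSubgroup S :=
  AddSubgroup.closure {z : S | ∃ x y : S, z = x * y - y * x}

open Matrix

lemma comm_mem_commSubgroup {S : Type*} [Ring S] (x y : S) :
    x * y - y * x ∈ commSubgroup S :=
  AddSubgroup.subset_closure ⟨x, y, rfl⟩

lemma trace_mem_of_mem {R : Type*} [Ring R] {d : ℕ}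
    {A : Matrix (Fin d) (Fin d) R}
    (h : A ∈ commSubgroup (Matrix (Fin d) (Fin d) R)) :
    A.trace ∈ commSubgroup R := by
  induction h using AddSubgroup.closure_induction with
  | mem z hz =>
    obtain ⟨x, y, rfl⟩ := hz
    have : (x * y - y * x).trace
        = ∑ i, ∑ j, (x i j * y j i - y j i * x i j) := by
      have h1 : (x * y).trace = ∑ i, ∑ j, x i j * y j i := by
        simp [Matrix.trace, Matrix.diag, Matrix.mul_apply]
      have h2 : (y * x).trace = ∑ i, ∑ j, y j i * x i j := by
        simp only [Matrix.trace, Matrix.diag, Matrix.mul_apply]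
        exact Finset.sum_comm
      rw [Matrix.trace_sub, h1, h2, ← Finset.sum_sub_distrib]
      simp [Finset.sum_sub_distrib]
    rw [this]
    exact AddSubgroup.sum_mem _ fun i _ =>
      AddSubgroup.sum_mem _ fun j _ => comm_mem_commSubgroup _ _
  | zero => simp [Matrix.trace_zero]
  | add a b _ _ ha hb => rw [Matrix.trace_add]; exact (commSubgroup R).add_mem ha hb
  | neg a _ ha => rw [Matrix.trace_neg]; exact (commSubgroup R).neg_mem ha

lemma stdBasisMatrix_offdiag_mem {R : Type*} [Ring R] {d : ℕ}
    {i j : Fin d} (h : i ≠ j) (a : R) :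
    single i j a ∈ commSubgroup (Matrix (Fin d) (Fin d) R) := by
  have key : single i j a
      = single i j a * single j j 1
        - single j j 1 * single i j a := by
    rw [Matrix.single_mul_single_same (c := a) i j j 1,
      Matrix.single_mul_single_of_ne (c := (1 : R)) j j i (Ne.symm h) a]
    simp
  rw [key]
  exact comm_mem_commSubgroup _ _

lemma stdBasisMatrix_diag_mem {R : Type*} [Ring R] {d : ℕ} (hd : 0 < d)
    (i : Fin d) (a : R) :
    single i i a - single ⟨0, hd⟩ ⟨0, hd⟩ a
      ∈ commSubgroup (Matrix (Fin d) (Fin d) R) := by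
  have key : single i i a - single ⟨0, hd⟩ ⟨0, hd⟩ a
      = single i ⟨0, hd⟩ a * single ⟨0, hd⟩ i 1
        - single ⟨0, hd⟩ i 1 * single i ⟨0, hd⟩ a := by
    rw [Matrix.single_mul_single_same (c := a) i (⟨0, hd⟩ : Fin d) i 1,
      Matrix.single_mul_single_same (c := (1 : R)) (⟨0, hd⟩ : Fin d) i (⟨0, hd⟩ : Fin d) a]
    simp
  rw [key]
  exact comm_mem_commSubgroup _ _

/-- A `d × d` matrix over a unital ring `R` is a sum of commutators iff its trace
is a sum of commutators in `R`; in particular every trace-zero matrix is a sum of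
commutators. -/
theorem stmt_1 (R : Type*) [Ring R] (d : ℕ) (hd : 0 < d)
    (A : Matrix (Fin d) (Fin d) R) :
    (A ∈ commSubgroup (Matrix (Fin d) (Fin d) R) ↔ A.trace ∈ commSubgroup R) ∧
      (A.trace = 0 → A ∈ commSubgroup (Matrix (Fin d) (Fin d) R)) := by
  set z : Fin d := ⟨0, hd⟩ with hz
  -- a single-entry matrix with entry a sum of commutators is a sum of commutators
  have hsingle : ∀ t : R, t ∈ commSubgroup R →
      single z z t ∈ commSubgroup (Matrix (Fin d) (Fin d) R) := by
    intro t ht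
    induction ht using AddSubgroup.closure_induction with
    | mem w hw =>
      obtain ⟨x, y, rfl⟩ := hw
      have : single z z (x * y - y * x)
          = single z z x * single z z y
            - single z z y * single z z x := by
        rw [Matrix.single_mul_single_same (c := x) z z z y,
          Matrix.single_mul_single_same (c := y) z z z x]
        ext a b
        simp only [Matrix.sub_apply, single, Matrix.of_apply]
        split_ifs <;> simp
      rw [this]
      exact comm_mem_commSubgroup _ _
    | zero => simpa using (commSubgroup (Matrix (Fin d) (Fin d) R)).zero_mem
    | add a b _ _ ha hb =>
      rw [single_add]
      exact add_mem ha hb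
    | neg a _ ha =>
      have : single z z (-a) = -single z z a := by
        ext i j
        simp only [single, Matrix.neg_apply, Matrix.of_apply]
        split_ifs <;> simp
      rw [this]
      exact neg_mem ha
  -- the trace-free part is always a sum of commutators
  have hmain : A - single z z A.trace
      ∈ commSubgroup (Matrix (Fin d) (Fin d) R) := by
    have hA : A = ∑ i, ∑ j, single i j (A i j) :=
      matrix_eq_sum_single A
    have htr : single z z A.trace
        = ∑ i, ∑ j, (if i = j then single z z (A i j) else 0) := by
      have h1 : ∀ i : Fin d,
          (∑ j, (if i = j then single z z (A i j) else 0))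
            = single z z (A i i) := by
        intro i
        simp
      rw [Finset.sum_congr rfl fun i _ => h1 i]
      ext a b
      simp only [Matrix.sum_apply, single, Matrix.of_apply, Matrix.trace,
        Matrix.diag]
      split_ifs <;> simp
    have key : A - single z z A.trace
        = ∑ i, ∑ j, (single i j (A i j)
            - (if i = j then single z z (A i j) else 0)) := by
      rw [Finset.sum_congr rfl fun i _ => Finset.sum_sub_distrib _ _,
        Finset.sum_sub_distrib, ← hA, ← htr]
    rw [key]
    refine AddSubgroup.sum_mem _ fun i _ => AddSubgroup.sum_mem _ fun j _ => ?_
    by_cases hij : i = j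
    · subst hij
      simpa using stdBasisMatrix_diag_mem hd i (A i i)
    · simpa [hij] using stdBasisMatrix_offdiag_mem hij (A i j)
  have hmpr : A.trace ∈ commSubgroup R →
      A ∈ commSubgroup (Matrix (Fin d) (Fin d) R) := by
    intro ht
    have : A = (A - single z z A.trace) + single z z A.trace := by
      abel
    rw [this]
    exact add_mem hmain (hsingle _ ht)
  refine ⟨⟨trace_mem_of_mem, hmpr⟩, fun h0 => hmpr ?_⟩
  rw [h0]
  exact zero_mem _
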